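/- Let K be a real symmetric 3×3 matrix and M a real symmetric 3×3 matrix. Then M:S(K⊗K):M = (1/3)·(tr(K·M))² + (2/3)·tr(K·M·K·M). In particular, if K is positive definite and M ≠ 0, then M:S(K⊗K):M > 0. -/

import Mathlib

open Matrix MeasureTheory

noncomputable section

/-- 3×3 real matrices. -/
abbrev Mat3 := Matrix (Fin 3) (Fin 3) ℝ

/-- Rank-4 tensors on ℝ³. -/
abbrev Tens4 := Fin 3 → Fin 3 → Fin 3 → Fin 3 → ℝ

/-- Tensor (outer) product of two matrices: `(K ⊗ L)_{ijkl} = K_{ij} L_{kl}`. -/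
def otimes (K L : Mat3) : Tens4 := fun i j k l => K i j * L k l

/-- Symmetrization of a rank-4 tensor: the average over all 24 permutations of the indices. -/
def symmetrize (T : Tens4) : Tens4 := fun i j k l =>
  (∑ σ : Equiv.Perm (Fin 4),
      T (![i, j, k, l] (σ 0)) (![i, j, k, l] (σ 1)) (![i, j, k, l] (σ 2)) (![i, j, k, l] (σ 3)))
    / 24

/-- Contraction of a rank-4 tensor with a matrix: `(𝔹:M)_{ij} = Σ_{k,l} 𝔹_{ijkl} M_{kl}`. -/
def contr (T : Tens4) (M : Mat3) : Mat3 :=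
  Matrix.of fun i j => ∑ k, ∑ l, T i j k l * M k l

/-- Full contraction `N:𝔹:M = Σ_{i,j,k,l} N_{ij} 𝔹_{ijkl} M_{kl}`. -/
def dcontr (N : Mat3) (T : Tens4) (M : Mat3) : ℝ :=
  ∑ i, ∑ j, ∑ k, ∑ l, N i j * T i j k l * M k l

/-- The matrix `(B + s·I)⁻¹` (matrix inverse). -/
def res (B : Mat3) (s : ℝ) : Mat3 := (B + s • (1 : Mat3))⁻¹

/-- `A(B) = (1/2)·∫₀^∞ (B + s·I)⁻¹ / √(det(B + s·I)) ds`, entrywise. -/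
def Amat (B : Mat3) : Mat3 :=
  Matrix.of fun i j =>
    (1 / 2) * ∫ s in Set.Ioi (0 : ℝ),
      res B s i j / Real.sqrt (B + s • (1 : Mat3)).det

/-- `𝔸(B) = (3/4)·∫₀^∞ s·S((B+sI)⁻¹ ⊗ (B+sI)⁻¹) / √(det(B+sI)) ds`, entrywise. -/
def Atens (B : Mat3) : Tens4 := fun i j k l =>
  (3 / 4) * ∫ s in Set.Ioi (0 : ℝ),
    s * symmetrize (otimes (res B s) (res B s)) i j k l
      / Real.sqrt (B + s • (1 : Mat3)).det

/-- `ℂ(B) = (3/4)·∫₀^∞ S((B+sI)⁻¹ ⊗ (B+sI)⁻¹) / √(det(B+sI)) ds`, entrywise. -/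
def Ctens (B : Mat3) : Tens4 := fun i j k l =>
  (3 / 4) * ∫ s in Set.Ioi (0 : ℝ),
    symmetrize (otimes (res B s) (res B s)) i j k l
      / Real.sqrt (B + s • (1 : Mat3)).det

end

set_option maxHeartbeats 4000000 in
theorem symK (K : Mat3) (h : ∀ a b, K b a = K a b) (i j k l : Fin 3) :
    symmetrize (otimes K K) i j k l
      = (K i j * K k l + K i k * K j l + K i l * K j k) / 3 := by
  unfold symmetrize otimes
  rw [← Equiv.Perm.decomposeFin.symm.sum_comp, Fintype.sum_prod_type]
  simp only [← (Equiv.Perm.decomposeFin (n := 2)).symm.sum_comp, Fintype.sum_prod_type]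
  simp only [← (Equiv.Perm.decomposeFin (n := 1)).symm.sum_comp, Fintype.sum_prod_type]
  simp only [Fin.sum_univ_succ, Finset.univ_unique, Finset.sum_const, Finset.card_singleton,
    one_smul, Fin.sum_univ_zero]
  simp only [show ∀ p e, (Equiv.Perm.decomposeFin.symm (p, e) : Equiv.Perm (Fin 4)) 0 = p from
      fun p e => Equiv.Perm.decomposeFin_symm_apply_zero p e,
    show ∀ p e, (Equiv.Perm.decomposeFin.symm (p, e) : Equiv.Perm (Fin 3)) 0 = p from
      fun p e => Equiv.Perm.decomposeFin_symm_apply_zero p e,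
    show ∀ p e, (Equiv.Perm.decomposeFin.symm (p, e) : Equiv.Perm (Fin 2)) 0 = p from
      fun p e => Equiv.Perm.decomposeFin_symm_apply_zero p e,
    show (1:Fin 4)=Fin.succ 0 from rfl, show (2:Fin 4)=Fin.succ 1 from rfl,
    show (3:Fin 4)=Fin.succ 2 from rfl, show (1:Fin 3)=Fin.succ 0 from rfl,
    show (2:Fin 3)=Fin.succ 1 from rfl, show (1:Fin 2)=Fin.succ 0 from rfl,
    Equiv.Perm.decomposeFin_symm_apply_succ, Equiv.Perm.one_apply]
  simp only [Equiv.swap_apply_def, Fin.succ]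
  norm_num
  rw [h j i, h k i, h l i, h k j, h l j, h l k]
  ring

set_option maxHeartbeats 4000000 in
theorem part1 (K M : Mat3) (hK : Kᵀ = K) (hM : Mᵀ = M) :
    dcontr M (symmetrize (otimes K K)) M
        = (1 / 3) * (K * M).trace ^ 2 + (2 / 3) * (K * M * K * M).trace := by
  have h : ∀ a b, K b a = K a b := fun a b => by rw [← Matrix.transpose_apply K a b, hK]
  have hm : ∀ a b, M b a = M a b := fun a b => by rw [← Matrix.transpose_apply M a b, hM]
  unfold dcontr
  simp only [symK K h]
  simp only [Matrix.trace, Matrix.mul_apply, Matrix.diag, Fin.sum_univ_succ, Fin.sum_univ_zero,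
    Fin.succ_zero_eq_one, Fin.succ_one_eq_two]
  rw [h 0 1, h 0 2, h 1 2, hm 0 1, hm 0 2, hm 1 2]
  ring

open scoped MatrixOrder in
theorem part2 (K M : Mat3) (hK : Kᵀ = K) (hM : Mᵀ = M) (hPD : K.PosDef) (hM0 : M ≠ 0) :
    0 < (1 / 3) * (K * M).trace ^ 2 + (2 / 3) * (K * M * K * M).trace := by
  have hKps := hPD.posSemidef
  set S := CFC.sqrt K with hSdef
  have hSS : S * S = K := CFC.sqrt_mul_sqrt_self K hKps.nonneg
  have hSh : Sᴴ = S := (CFC.sqrt_nonneg K).posSemidef.1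
  have hSt : Sᵀ = S := by rwa [Matrix.conjTranspose_eq_transpose_of_trivial] at hSh
  set A := S * M * S with hAdef
  have hAt : Aᵀ = A := by
    rw [hAdef, Matrix.transpose_mul, Matrix.transpose_mul, hSt, hM]
    rw [Matrix.mul_assoc]
  have hA : ∀ a b, A b a = A a b := fun a b => by
    rw [← Matrix.transpose_apply A a b, hAt]
  -- S is invertible
  have hdet : S.det ≠ 0 := by
    intro h0
    have : K.det = 0 := by rw [← hSS, Matrix.det_mul, h0, mul_zero]
    exact hPD.det_pos.ne' this
  have hA0 : A ≠ 0 := by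
    intro h0
    apply hM0
    have hu : IsUnit S.det := isUnit_iff_ne_zero.mpr hdet
    have : S⁻¹ * A * S⁻¹ = M := by
      rw [hAdef, Matrix.mul_assoc S⁻¹ (S * M * S) S⁻¹, Matrix.mul_assoc (S*M),
        Matrix.mul_nonsing_inv _ hu, Matrix.mul_one, ← Matrix.mul_assoc,
        Matrix.nonsing_inv_mul _ hu, Matrix.one_mul]
    rw [← this, h0, Matrix.mul_zero, Matrix.zero_mul]
  -- trace identity
  have htr : (K * M * K * M).trace = (A * A).trace := by
    have : K * M * K * M = S * (A * (S * M)) := by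
      rw [hAdef, ← hSS]
      simp only [Matrix.mul_assoc]
    rw [this, Matrix.trace_mul_comm, hAdef]
    simp only [Matrix.mul_assoc]
  have hexp : (A * A).trace = ∑ i, ∑ j, (A i j) ^ 2 := by
    rw [Matrix.trace]
    simp only [Matrix.diag, Matrix.mul_apply]
    refine Finset.sum_congr rfl fun i _ => Finset.sum_congr rfl fun j _ => ?_
    rw [hA j i, sq]
  have hpos : 0 < (A * A).trace := by
    rw [hexp]
    obtain ⟨i, j, hij⟩ : ∃ i j, A i j ≠ 0 := by
      by_contra hc
      push_neg at hc
      exact hA0 (by ext a b; simpa using hc a b)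
    have h1 : 0 < ∑ j, (A i j) ^ 2 :=
      Finset.sum_pos' (fun _ _ => sq_nonneg _)
        ⟨j, Finset.mem_univ j, by positivity⟩
    exact Finset.sum_pos' (fun _ _ => Finset.sum_nonneg fun _ _ => sq_nonneg _)
      ⟨i, Finset.mem_univ i, h1⟩
  nlinarith [sq_nonneg (K * M).trace]

theorem dcontr_symmetrize_otimes (K M : Mat3) (hK : Kᵀ = K) (hM : Mᵀ = M) :
    dcontr M (symmetrize (otimes K K)) M
        = (1 / 3) * (K * M).trace ^ 2 + (2 / 3) * (K * M * K * M).trace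
      ∧ (K.PosDef → M ≠ 0 → 0 < dcontr M (symmetrize (otimes K K)) M) := by
  have h1 := part1 K M hK hM
  exact ⟨h1, fun hPD hM0 => h1 ▸ part2 K M hK hM hPD hM0⟩
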